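/- Assume λ < L_g. Then for every n = 0,…,μ and every a ∈ I_h, the map x ↦ u_T^h(n,x,a) is Lipschitz continuous with constant (L_f/(L_g − λ))·e^{(L_g − λ)(T − nh)}: for all x, y ∈ ℝ^ν, |u_T^h(n,x,a) − u_T^h(n,y,a)| ≤ (L_f/(L_g − λ))·e^{(L_g − λ)(T − nh)}·‖x − y‖. -/

import Mathlib

noncomputable section

abbrev E (ν : ℕ) := EuclideanSpace ℝ (Fin ν)

/-- The discrete set of control values `I_h = {i·h : i = 0,…,N}`. -/
def Ih (h : ℝ) (N : ℕ) : Set ℝ := {r : ℝ | ∃ i : ℕ, i ≤ N ∧ r = i * h}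

/-- The discrete dynamic programming operator
`(A^h w)(x,a) = min_{b ∈ I_h, b ≥ a} [(1−λh)·w(x + h·g(x,a), b) + h·f(x,a)]`. -/
def Aop {ν : ℕ} (lam h : ℝ) (N : ℕ)
    (g : E ν → ℝ → E ν) (f : E ν → ℝ → ℝ)
    (w : E ν → ℝ → ℝ) (x : E ν) (a : ℝ) : ℝ :=
  sInf {v : ℝ | ∃ b ∈ Ih h N, a ≤ b ∧
    v = (1 - lam * h) * w (x + h • g x a) b + h * f x a}

lemma Ih_finite (h : ℝ) (N : ℕ) : (Ih h N).Finite := by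
  have hsub : Ih h N ⊆ (fun i : ℕ => (i : ℝ) * h) '' Set.Iic N := by
    rintro r ⟨i, hi, rfl⟩
    exact ⟨i, hi, rfl⟩
  exact ((Set.finite_Iic N).image _).subset hsub

lemma aop_min {ν : ℕ} (lam h : ℝ) (N : ℕ)
    (g : E ν → ℝ → E ν) (f : E ν → ℝ → ℝ)
    (w : E ν → ℝ → ℝ) (x : E ν) (a : ℝ) (ha : a ∈ Ih h N) :
    (∃ b ∈ Ih h N, a ≤ b ∧
        Aop lam h N g f w x a = (1 - lam * h) * w (x + h • g x a) b + h * f x a)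
    ∧ ∀ b ∈ Ih h N, a ≤ b →
        Aop lam h N g f w x a ≤ (1 - lam * h) * w (x + h • g x a) b + h * f x a := by
  unfold Aop
  set S := {v : ℝ | ∃ b ∈ Ih h N, a ≤ b ∧
      v = (1 - lam * h) * w (x + h • g x a) b + h * f x a} with hS
  have hSfin : S.Finite := by
    have hsub : S ⊆ (fun b => (1 - lam * h) * w (x + h • g x a) b + h * f x a) '' Ih h N := by
      rintro v ⟨b, hb, -, rfl⟩; exact ⟨b, hb, rfl⟩
    exact ((Ih_finite h N).image _).subset hsub
  have hne : S.Nonempty := ⟨_, a, ha, le_refl a, rfl⟩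
  have hmem := hne.csInf_mem hSfin
  constructor
  · obtain ⟨b, hb, hab, hv⟩ := hmem
    exact ⟨b, hb, hab, hv⟩
  · intro b hb hab
    exact csInf_le hSfin.bddBelow ⟨b, hb, hab, rfl⟩
set_option maxHeartbeats 1000000 in
theorem scheme_lipschitz_supercritical {ν : ℕ} (hν : 1 ≤ ν)
    (lam h : ℝ) (hlam : 0 < lam) (hh : 0 < h) (hhl : h < 1 / lam)
    (N : ℕ) (hN : 0 < N) (hNh : (N : ℝ) * h = 1)
    (g : E ν → ℝ → E ν) (f : E ν → ℝ → ℝ)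
    (Lg Mg Lf Mf : ℝ) (hLg : 0 < Lg) (hMg : 0 < Mg) (hLf : 0 < Lf) (hMf : 0 < Mf)
    (hgLip : ∀ x x' : E ν, ∀ a ∈ Set.Icc (0:ℝ) 1, ∀ a' ∈ Set.Icc (0:ℝ) 1,
      ‖g x a - g x' a'‖ ≤ Lg * (‖x - x'‖ + |a - a'|))
    (hgBdd : ∀ x : E ν, ∀ a ∈ Set.Icc (0:ℝ) 1, ‖g x a‖ ≤ Mg)
    (hfLip : ∀ x x' : E ν, ∀ a ∈ Set.Icc (0:ℝ) 1, ∀ a' ∈ Set.Icc (0:ℝ) 1,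
      |f x a - f x' a'| ≤ Lf * (‖x - x'‖ + |a - a'|))
    (hfBdd : ∀ x : E ν, ∀ a ∈ Set.Icc (0:ℝ) 1, |f x a| ≤ Mf)
    (hgt : lam < Lg)
    (μ : ℕ) (hμ : 0 < μ) (T : ℝ) (hT : T = μ * h)
    (uT : ℕ → E ν → ℝ → ℝ)
    (huTμ : ∀ (x : E ν) (a : ℝ), uT μ x a = 0)
    (huTrec : ∀ n : ℕ, 1 ≤ n → n ≤ μ → ∀ (x : E ν) (a : ℝ),
      uT (n - 1) x a = Aop lam h N g f (uT n) x a) :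
    ∀ n : ℕ, n ≤ μ → ∀ a ∈ Ih h N, ∀ x y : E ν,
      |uT n x a - uT n y a| ≤
        (Lf / (Lg - lam)) * Real.exp ((Lg - lam) * (T - n * h)) * ‖x - y‖ := by
  have hc : 0 < Lg - lam := by linarith
  set c : ℝ := Lg - lam with hcdef
  set K : ℝ := Lf / c with hKdef
  have hKpos : 0 < K := div_pos hLf hc
  have hKc : K * c = Lf := by rw [hKdef, div_mul_cancel₀ Lf hc.ne']
  have hlh : lam * h < 1 := by
    have := (lt_div_iff₀ hlam).mp hhl
    linarith [this]
  set C : ℕ → ℝ := fun m => K * (Real.exp (c * (T - m * h)) - 1) with hCdef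
  -- membership in Icc from Ih
  have hIcc : ∀ a ∈ Ih h N, a ∈ Set.Icc (0:ℝ) 1 := by
    rintro a ⟨i, hi, rfl⟩
    constructor
    · positivity
    · calc (i : ℝ) * h ≤ (N : ℝ) * h := by
            apply mul_le_mul_of_nonneg_right _ hh.le
            exact_mod_cast hi
        _ = 1 := hNh
  -- nonnegativity of C m for m ≤ μ
  have hCnonneg : ∀ m : ℕ, m ≤ μ → 0 ≤ C m := by
    intro m hm
    have hTm : (m : ℝ) * h ≤ T := by
      rw [hT]
      apply mul_le_mul_of_nonneg_right _ hh.le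
      exact_mod_cast hm
    have : (1:ℝ) ≤ Real.exp (c * (T - m * h)) := by
      apply Real.one_le_exp
      have : (0:ℝ) ≤ T - m * h := by linarith
      positivity
    simp only [hCdef]
    nlinarith
  -- key arithmetic inequality
  have hkey : ∀ n : ℕ, n + 1 ≤ μ →
      (1 - lam * h) * (1 + Lg * h) * C (n + 1) + Lf * h ≤ C n := by
    intro n hn1
    set Ee : ℝ := Real.exp (c * (T - (n + 1 : ℕ) * h)) with hEdef
    set D : ℝ := Real.exp (c * h) with hDdef
    have hED : Real.exp (c * (T - n * h)) = Ee * D := by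
      rw [hEdef, hDdef, ← Real.exp_add]
      congr 1
      push_cast
      ring
    have hE1 : (1:ℝ) ≤ Ee := by
      apply Real.one_le_exp
      have hTm : ((n:ℝ) + 1) * h ≤ T := by
        rw [hT]
        apply mul_le_mul_of_nonneg_right _ hh.le
        exact_mod_cast hn1
      have : (0:ℝ) ≤ T - ((n:ℕ) + 1 : ℕ) * h := by push_cast; linarith
      positivity
    have hD1 : 1 + c * h ≤ D := by
      have := Real.add_one_le_exp (c * h)
      rw [hDdef]; linarith
    have hq : (1 - lam * h) * (1 + Lg * h) ≤ 1 + c * h := by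
      have h1 : 0 ≤ lam * Lg * (h * h) := by positivity
      rw [hcdef]; nlinarith
    simp only [hCdef, hED]
    nlinarith [mul_nonneg (sub_nonneg.2 hD1) (mul_nonneg hKpos.le (sub_nonneg.2 hE1)),
      mul_nonneg (sub_nonneg.2 hq) (mul_nonneg hKpos.le (sub_nonneg.2 hE1)),
      mul_nonneg hKpos.le (by linarith : (0:ℝ) ≤ D - 1 - c * h), hKc]
  -- main induction
  have main : ∀ j : ℕ, ∀ n : ℕ, μ = n + j → ∀ a ∈ Ih h N, ∀ x y : E ν,
      |uT n x a - uT n y a| ≤ C n * ‖x - y‖ := by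
    intro j
    induction j with
    | zero =>
      intro n hn a ha x y
      have hnμ : n = μ := by omega
      subst hnμ
      rw [huTμ, huTμ, sub_self, abs_zero]
      exact mul_nonneg (hCnonneg n le_rfl) (norm_nonneg _)
    | succ j IH =>
      intro n hn a ha x y
      have hn1 : n + 1 ≤ μ := by omega
      have IH' := IH (n + 1) (by omega)
      have hrec : ∀ (z : E ν) (a' : ℝ), uT n z a' = Aop lam h N g f (uT (n+1)) z a' := by
        intro z a'
        have := huTrec (n + 1) (by omega) (by omega) z a'
        simpa using this
      have ha01 := hIcc a ha
      have hCn1 : 0 ≤ C (n + 1) := hCnonneg (n + 1) hn1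
      set x' : E ν := x + h • g x a with hx'def
      set y' : E ν := y + h • g y a with hy'def
      have hxy' : ‖x' - y'‖ ≤ (1 + Lg * h) * ‖x - y‖ := by
        have hdiff : x' - y' = (x - y) + h • (g x a - g y a) := by
          rw [hx'def, hy'def, smul_sub]; abel
        have hgl := hgLip x y a ha01 a ha01
        rw [sub_self, abs_zero, add_zero] at hgl
        calc ‖x' - y'‖ ≤ ‖x - y‖ + ‖h • (g x a - g y a)‖ := by
              rw [hdiff]; exact norm_add_le _ _
          _ = ‖x - y‖ + h * ‖g x a - g y a‖ := by
              rw [norm_smul, Real.norm_eq_abs, abs_of_pos hh]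
          _ ≤ ‖x - y‖ + h * (Lg * ‖x - y‖) := by
              have := mul_le_mul_of_nonneg_left hgl hh.le
              linarith
          _ = (1 + Lg * h) * ‖x - y‖ := by ring
      set Db : ℝ := ((1 - lam * h) * (1 + Lg * h) * C (n + 1) + Lf * h) * ‖x - y‖ with hDbdef
      have hGbound : ∀ b ∈ Ih h N,
          |((1 - lam * h) * uT (n+1) x' b + h * f x a)
            - ((1 - lam * h) * uT (n+1) y' b + h * f y a)| ≤ Db := by
        intro b hb
        have hu : |uT (n+1) x' b - uT (n+1) y' b| ≤ C (n + 1) * ((1 + Lg * h) * ‖x - y‖) := by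
          calc |uT (n+1) x' b - uT (n+1) y' b| ≤ C (n + 1) * ‖x' - y'‖ :=
                IH' b hb x' y'
            _ ≤ C (n + 1) * ((1 + Lg * h) * ‖x - y‖) :=
                mul_le_mul_of_nonneg_left hxy' hCn1
        have hfb : |f x a - f y a| ≤ Lf * ‖x - y‖ := by
          have := hfLip x y a ha01 a ha01
          rw [sub_self, abs_zero, add_zero] at this
          exact this
        have heq : ((1 - lam * h) * uT (n+1) x' b + h * f x a)
            - ((1 - lam * h) * uT (n+1) y' b + h * f y a)
            = (1 - lam * h) * (uT (n+1) x' b - uT (n+1) y' b) + h * (f x a - f y a) := by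
          ring
        rw [heq]
        calc |(1 - lam * h) * (uT (n+1) x' b - uT (n+1) y' b) + h * (f x a - f y a)|
            ≤ |(1 - lam * h) * (uT (n+1) x' b - uT (n+1) y' b)| + |h * (f x a - f y a)| :=
              abs_add_le _ _
          _ = (1 - lam * h) * |uT (n+1) x' b - uT (n+1) y' b| + h * |f x a - f y a| := by
              rw [abs_mul, abs_mul, abs_of_nonneg (by linarith : (0:ℝ) ≤ 1 - lam * h),
                abs_of_pos hh]
          _ ≤ Db := by
              have h1 := mul_le_mul_of_nonneg_left hu (by linarith : (0:ℝ) ≤ 1 - lam * h)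
              have h2 := mul_le_mul_of_nonneg_left hfb hh.le
              rw [hDbdef]; nlinarith
      have hboth : |uT n x a - uT n y a| ≤ Db := by
        rw [abs_sub_le_iff]
        constructor
        · obtain ⟨b, hb, hab, hyeq⟩ := (aop_min lam h N g f (uT (n+1)) y a ha).1
          have hxle := (aop_min lam h N g f (uT (n+1)) x a ha).2 b hb hab
          have h1 : uT n x a ≤ (1 - lam * h) * uT (n+1) x' b + h * f x a := by
            rw [hrec x a]; exact hxle
          have h2 : uT n y a = (1 - lam * h) * uT (n+1) y' b + h * f y a := by
            rw [hrec y a]; exact hyeq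
          have h3 := hGbound b hb
          have := le_abs_self (((1 - lam * h) * uT (n+1) x' b + h * f x a)
            - ((1 - lam * h) * uT (n+1) y' b + h * f y a))
          linarith
        · obtain ⟨b, hb, hab, hxeq⟩ := (aop_min lam h N g f (uT (n+1)) x a ha).1
          have hyle := (aop_min lam h N g f (uT (n+1)) y a ha).2 b hb hab
          have h1 : uT n y a ≤ (1 - lam * h) * uT (n+1) y' b + h * f y a := by
            rw [hrec y a]; exact hyle
          have h2 : uT n x a = (1 - lam * h) * uT (n+1) x' b + h * f x a := by
            rw [hrec x a]; exact hxeq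
          have h3 := hGbound b hb
          have := neg_abs_le (((1 - lam * h) * uT (n+1) x' b + h * f x a)
            - ((1 - lam * h) * uT (n+1) y' b + h * f y a))
          linarith
      calc |uT n x a - uT n y a| ≤ Db := hboth
        _ ≤ C n * ‖x - y‖ := by
            rw [hDbdef]
            exact mul_le_mul_of_nonneg_right (hkey n hn1) (norm_nonneg _)
  intro n hn a ha x y
  have hmain := main (μ - n) n (by omega) a ha x y
  have hle : C n ≤ K * Real.exp (c * (T - n * h)) := by
    simp only [hCdef]
    nlinarith
  calc |uT n x a - uT n y a| ≤ C n * ‖x - y‖ := hmain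
    _ ≤ K * Real.exp (c * (T - n * h)) * ‖x - y‖ :=
        mul_le_mul_of_nonneg_right hle (norm_nonneg _)
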